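/- arXiv:2308.08390 — 5 statements merged into one kernel-verified Lean document; each statement's English description precedes it below -/
import Mathlib

section
/- Under instrument exclusion, random assignment, and monotonicity, for every Borel set B: ℙ(Y ∈ B, D = d_max | Z = z) ≤ ℙ(Y ∈ B, D = d_max | Z = z'), where d_max is the maximum value of the treatment. That is, the joint probability of the outcome lying in B and taking the maximal treatment is monotone increasing in the instrument. -/
open MeasureTheory ProbabilityTheory Set

/-- Under exclusion, random assignment, and monotonicity,
for every Borel set `B`, `ℙ(Y ∈ B, D = d_max | Z = z) ≤ ℙ(Y ∈ B, D = d_max | Z = z')`. -/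
theorem stmt1 {Ω : Type*} [MeasureSpace Ω] [IsProbabilityMeasure (ℙ : Measure Ω)]
    {α : Type*} [MeasurableSpace α] [MeasurableSingletonClass α]
    (𝒟 : Finset ℝ) (h𝒟 : 𝒟.Nonempty)
    (Yp : ℝ → Ω → ℝ)            -- potential outcomes Y_d (exclusion already imposed)
    (Dz Dz' : Ω → ℝ)            -- potential treatments
    (Z : Ω → α) (z z' : α)
    (hDzval : ∀ ω, Dz ω ∈ 𝒟) (hDz'val : ∀ ω, Dz' ω ∈ 𝒟)
    (hYp : ∀ d, Measurable (Yp d)) (hDz : Measurable Dz) (hDz' : Measurable Dz')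
    (hZ : Measurable Z)
    (hzpos : 0 < ℙ {ω | Z ω = z}) (hz'pos : 0 < ℙ {ω | Z ω = z'})
    -- random assignment: Z jointly independent of all potential variables
    (hindep : IndepFun Z (fun ω => ((fun d : ℝ => Yp d ω), Dz ω, Dz' ω)) ℙ)
    -- monotonicity
    (hmono : ∀ᵐ ω ∂(ℙ : Measure Ω), Dz ω ≤ Dz' ω)
    (D Y : Ω → ℝ)
    (hDonz : ∀ ω, Z ω = z → D ω = Dz ω)
    (hDonz' : ∀ ω, Z ω = z' → D ω = Dz' ω)
    (hY : ∀ ω, Y ω = Yp (D ω) ω) :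
    ∀ B : Set ℝ, MeasurableSet B →
      (ℙ {ω | Y ω ∈ B ∧ D ω = 𝒟.max' h𝒟 ∧ Z ω = z}).toReal / (ℙ {ω | Z ω = z}).toReal ≤
      (ℙ {ω | Y ω ∈ B ∧ D ω = 𝒟.max' h𝒟 ∧ Z ω = z'}).toReal / (ℙ {ω | Z ω = z'}).toReal := by
  intro B hB
  set dm := 𝒟.max' h𝒟 with hdm
  set W : Ω → (ℝ → ℝ) × ℝ × ℝ := fun ω => ((fun d : ℝ => Yp d ω), Dz ω, Dz' ω) with hW
  -- measurable sets in the codomain picking out (Yp dm ∈ B, Dz = dm) and (Yp dm ∈ B, Dz' = dm)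
  set S : Set ((ℝ → ℝ) × ℝ × ℝ) := {p | p.1 dm ∈ B ∧ p.2.1 = dm} with hS
  set S' : Set ((ℝ → ℝ) × ℝ × ℝ) := {p | p.1 dm ∈ B ∧ p.2.2 = dm} with hS'
  have hSm : MeasurableSet S := by
    have h1 : MeasurableSet {p : (ℝ → ℝ) × ℝ × ℝ | p.1 dm ∈ B} :=
      ((measurable_pi_apply dm).comp measurable_fst) hB
    have h2 : MeasurableSet {p : (ℝ → ℝ) × ℝ × ℝ | p.2.1 = dm} :=
      (measurable_fst.comp measurable_snd) (measurableSet_singleton dm)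
    exact h1.inter h2
  have hS'm : MeasurableSet S' := by
    have h1 : MeasurableSet {p : (ℝ → ℝ) × ℝ × ℝ | p.1 dm ∈ B} :=
      ((measurable_pi_apply dm).comp measurable_fst) hB
    have h2 : MeasurableSet {p : (ℝ → ℝ) × ℝ × ℝ | p.2.2 = dm} :=
      (measurable_snd.comp measurable_snd) (measurableSet_singleton dm)
    exact h1.inter h2
  -- set equalities
  have hsetz : {ω | Y ω ∈ B ∧ D ω = dm ∧ Z ω = z} = Z ⁻¹' {z} ∩ W ⁻¹' S := by
    ext ω
    simp only [mem_setOf_eq, mem_inter_iff, mem_preimage, mem_singleton_iff, hS, hW]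
    constructor
    · rintro ⟨hYB, hDdm, hZz⟩
      have hD : D ω = Dz ω := hDonz ω hZz
      refine ⟨hZz, ?_, by rw [← hD]; exact hDdm⟩
      have : Yp (D ω) ω ∈ B := by rw [← hY ω]; exact hYB
      rwa [hDdm] at this
    · rintro ⟨hZz, hYB, hDzdm⟩
      have hD : D ω = Dz ω := hDonz ω hZz
      refine ⟨?_, by rw [hD]; exact hDzdm, hZz⟩
      rw [hY ω, hD, hDzdm]; exact hYB
  have hsetz' : {ω | Y ω ∈ B ∧ D ω = dm ∧ Z ω = z'} = Z ⁻¹' {z'} ∩ W ⁻¹' S' := by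
    ext ω
    simp only [mem_setOf_eq, mem_inter_iff, mem_preimage, mem_singleton_iff, hS', hW]
    constructor
    · rintro ⟨hYB, hDdm, hZz⟩
      have hD : D ω = Dz' ω := hDonz' ω hZz
      refine ⟨hZz, ?_, by rw [← hD]; exact hDdm⟩
      have : Yp (D ω) ω ∈ B := by rw [← hY ω]; exact hYB
      rwa [hDdm] at this
    · rintro ⟨hZz, hYB, hDzdm⟩
      have hD : D ω = Dz' ω := hDonz' ω hZz
      refine ⟨?_, by rw [hD]; exact hDzdm, hZz⟩
      rw [hY ω, hD, hDzdm]; exact hYB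
  have hZz : {ω | Z ω = z} = Z ⁻¹' {z} := rfl
  have hZz' : {ω | Z ω = z'} = Z ⁻¹' {z'} := rfl
  have hmul : ℙ (Z ⁻¹' {z} ∩ W ⁻¹' S) = ℙ (Z ⁻¹' {z}) * ℙ (W ⁻¹' S) :=
    hindep.measure_inter_preimage_eq_mul _ _ (measurableSet_singleton z) hSm
  have hmul' : ℙ (Z ⁻¹' {z'} ∩ W ⁻¹' S') = ℙ (Z ⁻¹' {z'}) * ℙ (W ⁻¹' S') :=
    hindep.measure_inter_preimage_eq_mul _ _ (measurableSet_singleton z') hS'm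
  -- monotonicity: W⁻¹S ≤ᵐ W⁻¹S'
  have hsub : ℙ (W ⁻¹' S) ≤ ℙ (W ⁻¹' S') := by
    apply measure_mono_ae
    filter_upwards [hmono] with ω hle
    intro hmem
    simp only [mem_preimage, hS, hS', hW, mem_setOf_eq] at hmem ⊢
    refine ⟨hmem.1, le_antisymm (Finset.le_max' _ _ (hDz'val ω)) ?_⟩
    calc dm = Dz ω := hmem.2.symm
      _ ≤ Dz' ω := hle
  have hzt : (ℙ {ω | Z ω = z}).toReal ≠ 0 :=
    (ENNReal.toReal_pos hzpos.ne' (measure_ne_top _ _)).ne'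
  have hz't : (ℙ {ω | Z ω = z'}).toReal ≠ 0 :=
    (ENNReal.toReal_pos hz'pos.ne' (measure_ne_top _ _)).ne'
  rw [hsetz, hsetz', hmul, hmul', hZz, hZz'] at *
  rw [ENNReal.toReal_mul, ENNReal.toReal_mul, mul_comm, mul_comm ((ℙ : Measure Ω) (Z ⁻¹' {z'})).toReal,
    mul_div_assoc, mul_div_assoc, div_self hzt, div_self hz't, mul_one, mul_one]
  exact ENNReal.toReal_mono (measure_ne_top _ _) hsub
end

section
/- Under instrument exclusion, random assignment, and monotonicity, for every Borel set B: ℙ(Y ∈ B, D = d_min | Z = z) ≥ ℙ(Y ∈ B, D = d_min | Z = z'), where d_min is the minimum value of the treatment. -/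
open MeasureTheory ProbabilityTheory Set

/-- Under exclusion, random assignment, and monotonicity,
for every Borel set `B`, `ℙ(Y ∈ B, D = d_min | Z = z) ≥ ℙ(Y ∈ B, D = d_min | Z = z')`. -/
theorem stmt2 {Ω : Type*} [MeasureSpace Ω] [IsProbabilityMeasure (ℙ : Measure Ω)]
    {α : Type*} [MeasurableSpace α] [MeasurableSingletonClass α]
    (𝒟 : Finset ℝ) (h𝒟 : 𝒟.Nonempty)
    (Yp : ℝ → Ω → ℝ)            -- potential outcomes Y_d (exclusion already imposed)
    (Dz Dz' : Ω → ℝ)            -- potential treatments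
    (Z : Ω → α) (z z' : α)
    (hDzval : ∀ ω, Dz ω ∈ 𝒟) (hDz'val : ∀ ω, Dz' ω ∈ 𝒟)
    (hYp : ∀ d, Measurable (Yp d)) (hDz : Measurable Dz) (hDz' : Measurable Dz')
    (hZ : Measurable Z)
    (hzpos : 0 < ℙ {ω | Z ω = z}) (hz'pos : 0 < ℙ {ω | Z ω = z'})
    -- random assignment: Z jointly independent of all potential variables
    (hindep : IndepFun Z (fun ω => ((fun d : ℝ => Yp d ω), Dz ω, Dz' ω)) ℙ)
    -- monotonicity
    (hmono : ∀ᵐ ω ∂(ℙ : Measure Ω), Dz ω ≤ Dz' ω)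
    (D Y : Ω → ℝ)
    (hDonz : ∀ ω, Z ω = z → D ω = Dz ω)
    (hDonz' : ∀ ω, Z ω = z' → D ω = Dz' ω)
    (hY : ∀ ω, Y ω = Yp (D ω) ω) :
    ∀ B : Set ℝ, MeasurableSet B →
      (ℙ {ω | Y ω ∈ B ∧ D ω = 𝒟.min' h𝒟 ∧ Z ω = z'}).toReal / (ℙ {ω | Z ω = z'}).toReal ≤
      (ℙ {ω | Y ω ∈ B ∧ D ω = 𝒟.min' h𝒟 ∧ Z ω = z}).toReal / (ℙ {ω | Z ω = z}).toReal := by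
  intro B hB
  set dm := 𝒟.min' h𝒟 with hdm
  set W : Ω → (ℝ → ℝ) × ℝ × ℝ := fun ω => ((fun d => Yp d ω), Dz ω, Dz' ω) with hWdef
  have ht2 : MeasurableSet {p : (ℝ → ℝ) × ℝ × ℝ | p.1 dm ∈ B ∧ p.2.1 = dm} :=
    (((measurable_pi_apply dm).comp measurable_fst) hB).inter
      ((measurable_fst.comp measurable_snd) (measurableSet_singleton dm))
  have ht2' : MeasurableSet {p : (ℝ → ℝ) × ℝ × ℝ | p.1 dm ∈ B ∧ p.2.2 = dm} :=
    (((measurable_pi_apply dm).comp measurable_fst) hB).inter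
      ((measurable_snd.comp measurable_snd) (measurableSet_singleton dm))
  rw [ProbabilityTheory.indepFun_iff_measure_inter_preimage_eq_mul] at hindep
  have hsetz : {ω | Y ω ∈ B ∧ D ω = dm ∧ Z ω = z}
      = Z ⁻¹' {z} ∩ W ⁻¹' {p | p.1 dm ∈ B ∧ p.2.1 = dm} := by
    ext ω
    simp only [mem_setOf_eq, mem_inter_iff, mem_preimage, mem_singleton_iff, hWdef]
    constructor
    · rintro ⟨hy, hd, hz⟩
      refine ⟨hz, ?_, ?_⟩
      · rw [← hd, ← hY ω]; exact hy
      · rw [← hDonz ω hz]; exact hd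
    · rintro ⟨hz, hy, hd⟩
      have hD : D ω = dm := by rw [hDonz ω hz]; exact hd
      exact ⟨by rw [hY ω, hD]; exact hy, hD, hz⟩
  have hsetz' : {ω | Y ω ∈ B ∧ D ω = dm ∧ Z ω = z'}
      = Z ⁻¹' {z'} ∩ W ⁻¹' {p | p.1 dm ∈ B ∧ p.2.2 = dm} := by
    ext ω
    simp only [mem_setOf_eq, mem_inter_iff, mem_preimage, mem_singleton_iff, hWdef]
    constructor
    · rintro ⟨hy, hd, hz⟩
      refine ⟨hz, ?_, ?_⟩
      · rw [← hd, ← hY ω]; exact hy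
      · rw [← hDonz' ω hz]; exact hd
    · rintro ⟨hz, hy, hd⟩
      have hD : D ω = dm := by rw [hDonz' ω hz]; exact hd
      exact ⟨by rw [hY ω, hD]; exact hy, hD, hz⟩
  have hmulz := hindep {z} {p : (ℝ → ℝ) × ℝ × ℝ | p.1 dm ∈ B ∧ p.2.1 = dm}
    (measurableSet_singleton z) ht2
  have hmulz' := hindep {z'} {p : (ℝ → ℝ) × ℝ × ℝ | p.1 dm ∈ B ∧ p.2.2 = dm}
    (measurableSet_singleton z') ht2'
  have hle : ℙ (W ⁻¹' {p | p.1 dm ∈ B ∧ p.2.2 = dm})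
      ≤ ℙ (W ⁻¹' {p | p.1 dm ∈ B ∧ p.2.1 = dm}) := by
    apply measure_mono_ae
    filter_upwards [hmono] with ω h hω
    obtain ⟨hy, hd⟩ := hω
    refine ⟨hy, le_antisymm ?_ (𝒟.min'_le _ (hDzval ω))⟩
    calc Dz ω ≤ Dz' ω := h
      _ = dm := hd
  have hpz : {ω | Z ω = z} = Z ⁻¹' {z} := rfl
  have hpz' : {ω | Z ω = z'} = Z ⁻¹' {z'} := rfl
  have hzne : (ℙ (Z ⁻¹' {z})).toReal ≠ 0 :=
    ENNReal.toReal_ne_zero.mpr ⟨by rw [← hpz]; exact hzpos.ne', measure_ne_top _ _⟩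
  have hz'ne : (ℙ (Z ⁻¹' {z'})).toReal ≠ 0 :=
    ENNReal.toReal_ne_zero.mpr ⟨by rw [← hpz']; exact hz'pos.ne', measure_ne_top _ _⟩
  rw [hsetz, hsetz', hpz, hpz', hmulz, hmulz', ENNReal.toReal_mul, ENNReal.toReal_mul,
    mul_div_cancel_left₀ _ hz'ne, mul_div_cancel_left₀ _ hzne]
  exact ENNReal.toReal_mono (measure_ne_top _ _) hle
end

section
/- Full instrument monotonicity for a multi-dimensional instrument implies partial instrument monotonicity, but not conversely: there exist potential treatments D_z, z ∈ {0,1}², satisfying partial monotonicity (monotone in each coordinate with the other fixed) but for which neither D_{(1,0)} ≥ D_{(0,1)} a.s. nor D_{(0,1)} ≥ D_{(1,0)} a.s. holds. -/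
open MeasureTheory ProbabilityTheory Set
open scoped ENNReal

noncomputable def myMS : MeasureSpace Bool :=
  ⟨(2 : ℝ≥0∞)⁻¹ • (Measure.dirac false + Measure.dirac true)⟩

/-- Full monotonicity implies partial monotonicity, but not conversely:
there is a probability space and potential treatments `D_z`, `z ∈ {0,1}²`, satisfying
partial monotonicity but with neither `D_{(1,0)} ≥ D_{(0,1)}` a.s. nor
`D_{(0,1)} ≥ D_{(1,0)}` a.s. -/
theorem stmt9 :
    -- (i) full monotonicity implies partial monotonicity
    (∀ (Ω : Type) (_ : MeasureSpace Ω) (_ : IsProbabilityMeasure (ℙ : Measure Ω))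
        (D : Bool × Bool → Ω → ℝ),
      (∀ z z' : Bool × Bool,
          (∀ᵐ ω ∂(ℙ : Measure Ω), D z ω ≤ D z' ω) ∨
          (∀ᵐ ω ∂(ℙ : Measure Ω), D z' ω ≤ D z ω)) →
      ((∀ z₂ : Bool,
          (∀ᵐ ω ∂(ℙ : Measure Ω), D (false, z₂) ω ≤ D (true, z₂) ω) ∨
          (∀ᵐ ω ∂(ℙ : Measure Ω), D (true, z₂) ω ≤ D (false, z₂) ω)) ∧
       (∀ z₁ : Bool,
          (∀ᵐ ω ∂(ℙ : Measure Ω), D (z₁, false) ω ≤ D (z₁, true) ω) ∨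
          (∀ᵐ ω ∂(ℙ : Measure Ω), D (z₁, true) ω ≤ D (z₁, false) ω)))) ∧
    -- (ii) the converse fails
    (∃ (Ω : Type) (_ : MeasureSpace Ω) (_ : IsProbabilityMeasure (ℙ : Measure Ω))
        (D : Bool × Bool → Ω → ℝ),
      ((∀ z₂ : Bool, ∀ᵐ ω ∂(ℙ : Measure Ω), D (false, z₂) ω ≤ D (true, z₂) ω) ∧
       (∀ z₁ : Bool, ∀ᵐ ω ∂(ℙ : Measure Ω), D (z₁, false) ω ≤ D (z₁, true) ω)) ∧
      ¬ (∀ᵐ ω ∂(ℙ : Measure Ω), D (false, true) ω ≤ D (true, false) ω) ∧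
      ¬ (∀ᵐ ω ∂(ℙ : Measure Ω), D (true, false) ω ≤ D (false, true) ω)) := by
  constructor
  · intro Ω _ _ D hfull
    exact ⟨fun z₂ => hfull (false, z₂) (true, z₂), fun z₁ => hfull (z₁, false) (z₁, true)⟩
  · have hpt : ∀ b : Bool,
        ((2 : ℝ≥0∞)⁻¹ • (Measure.dirac false + Measure.dirac true)) {b} ≠ 0 := by
      intro b
      cases b <;> simp [Measure.dirac_apply]
    refine ⟨Bool, myMS, ?_, fun z ω =>
      match z with
      | (false, false) => 0
      | (true, false) => if ω then 1 else 0
      | (false, true) => if ω then 0 else 1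
      | (true, true) => 1, ?_, ?_, ?_⟩
    · constructor
      show ((2 : ℝ≥0∞)⁻¹ • (Measure.dirac false + Measure.dirac true)) univ = 1
      simp [Measure.dirac_apply, ENNReal.inv_two_add_inv_two]
    · constructor
      · intro z₂
        apply Filter.Eventually.of_forall
        intro ω
        cases z₂ <;> cases ω <;> norm_num
      · intro z₁
        apply Filter.Eventually.of_forall
        intro ω
        cases z₁ <;> cases ω <;> norm_num
    · intro h
      rw [ae_iff] at h
      refine hpt false (measure_mono_null ?_ h)
      intro ω hω
      simp only [Set.mem_singleton_iff] at hω
      subst hω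
      simp only [Set.mem_setOf_eq]
      show ¬ ((1:ℝ) ≤ 0)
      norm_num
    · intro h
      rw [ae_iff] at h
      refine hpt true (measure_mono_null ?_ h)
      intro ω hω
      simp only [Set.mem_singleton_iff] at hω
      subst hω
      simp only [Set.mem_setOf_eq]
      show ¬ ((1:ℝ) ≤ 0)
      norm_num
end

section
/- Under the partial IV validity assumption (exclusion, random assignment, and partial monotonicity in direction l with all other coordinates z_{-l} fixed), for all Borel sets B and the maximal treatment value d_max: ℙ(Y ∈ B, D = d_max | Z = (z_l^k, z_{-l})) ≤ ℙ(Y ∈ B, D = d_max | Z = (z_l^{k+1}, z_{-l})). -/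
open MeasureTheory ProbabilityTheory Set

/-- Under partial IV validity (exclusion, random assignment, and partial
monotonicity in direction `l` holding `z_{-l}` fixed), for all Borel `B`:
`ℙ(Y ∈ B, D = d_max | Z = (z_l^k, z_{-l})) ≤ ℙ(Y ∈ B, D = d_max | Z = (z_l^{k+1}, z_{-l}))`. -/
theorem stmt14 {Ω : Type*} [MeasureSpace Ω] [IsProbabilityMeasure (ℙ : Measure Ω)]
    {L : ℕ} (𝒟 : Finset ℝ) (h𝒟 : 𝒟.Nonempty)
    (Yp : ℝ → Ω → ℝ)                      -- potential outcomes (exclusion imposed)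
    (Dp : (Fin L → ℝ) → Ω → ℝ)            -- potential treatments
    (Z : Ω → (Fin L → ℝ))
    (l : Fin L) (za zb : Fin L → ℝ)       -- za = (z_l^k, z_{-l}), zb = (z_l^{k+1}, z_{-l})
    (hsame : ∀ j : Fin L, j ≠ l → za j = zb j)
    (hYp : ∀ d, Measurable (Yp d)) (hDp : ∀ v, Measurable (Dp v)) (hZ : Measurable Z)
    (hval : ∀ v ω, Dp v ω ∈ 𝒟)
    (hzapos : 0 < ℙ {ω | Z ω = za}) (hzbpos : 0 < ℙ {ω | Z ω = zb})
    -- random assignment: Z jointly independent of all potential variables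
    (hindep : IndepFun Z
      (fun ω => ((fun d : ℝ => Yp d ω), (fun v : Fin L → ℝ => Dp v ω))) ℙ)
    -- partial monotonicity
    (hmono : ∀ᵐ ω ∂(ℙ : Measure Ω), Dp za ω ≤ Dp zb ω)
    (D Y : Ω → ℝ)
    (hD : ∀ ω, D ω = Dp (Z ω) ω) (hY : ∀ ω, Y ω = Yp (D ω) ω) :
    ∀ B : Set ℝ, MeasurableSet B →
      (ℙ {ω | Y ω ∈ B ∧ D ω = 𝒟.max' h𝒟 ∧ Z ω = za}).toReal / (ℙ {ω | Z ω = za}).toReal ≤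
      (ℙ {ω | Y ω ∈ B ∧ D ω = 𝒟.max' h𝒟 ∧ Z ω = zb}).toReal / (ℙ {ω | Z ω = zb}).toReal := by
  intro B hB
  set dm := 𝒟.max' h𝒟 with hdm
  set W : Ω → (ℝ → ℝ) × ((Fin L → ℝ) → ℝ) :=
    fun ω => ((fun d : ℝ => Yp d ω), (fun v : Fin L → ℝ => Dp v ω)) with hW
  -- the sets in the codomain
  have hSmeas : ∀ v : Fin L → ℝ,
      MeasurableSet {p : (ℝ → ℝ) × ((Fin L → ℝ) → ℝ) | p.1 dm ∈ B ∧ p.2 v = dm} := by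
    intro v
    have h1 : Measurable fun p : (ℝ → ℝ) × ((Fin L → ℝ) → ℝ) => p.1 dm :=
      (measurable_pi_apply dm).comp measurable_fst
    have h2 : Measurable fun p : (ℝ → ℝ) × ((Fin L → ℝ) → ℝ) => p.2 v :=
      (measurable_pi_apply v).comp measurable_snd
    exact (h1 hB).inter (h2 (measurableSet_singleton dm))
  have hzmeas : ∀ v : Fin L → ℝ, MeasurableSet ({v} : Set (Fin L → ℝ)) := by
    intro v
    have : ({v} : Set (Fin L → ℝ)) = ⋂ j, (fun f : Fin L → ℝ => f j) ⁻¹' {v j} := by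
      ext f; simp [funext_iff]
    rw [this]
    exact MeasurableSet.iInter fun j =>
      (measurable_pi_apply j) (measurableSet_singleton (v j))
  -- key set identity
  have hkey : ∀ v : Fin L → ℝ,
      {ω | Y ω ∈ B ∧ D ω = dm ∧ Z ω = v} =
        Z ⁻¹' {v} ∩ W ⁻¹' {p | p.1 dm ∈ B ∧ p.2 v = dm} := by
    intro v
    ext ω
    simp only [mem_setOf_eq, mem_inter_iff, mem_preimage, mem_singleton_iff, hW]
    constructor
    · rintro ⟨hy, hd, hz⟩
      refine ⟨hz, ?_, ?_⟩
      · rwa [hY ω, hd] at hy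
      · rw [← hz, ← hD ω]; exact hd
    · rintro ⟨hz, hy, hd⟩
      have hDv : D ω = dm := by rw [hD ω, hz]; exact hd
      exact ⟨by rwa [hY ω, hDv], hDv, hz⟩
  -- factorization via independence
  have hfac : ∀ v : Fin L → ℝ,
      ℙ {ω | Y ω ∈ B ∧ D ω = dm ∧ Z ω = v} =
        ℙ {ω | Z ω = v} * ℙ (W ⁻¹' {p | p.1 dm ∈ B ∧ p.2 v = dm}) := by
    intro v
    rw [hkey v]
    have := hindep.measure_inter_preimage_eq_mul ({v} : Set (Fin L → ℝ))
      {p | p.1 dm ∈ B ∧ p.2 v = dm} (hzmeas v) (hSmeas v)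
    exact this
  -- monotone comparison of the two W-events
  have hle : ℙ (W ⁻¹' {p | p.1 dm ∈ B ∧ p.2 za = dm}) ≤
      ℙ (W ⁻¹' {p | p.1 dm ∈ B ∧ p.2 zb = dm}) := by
    apply measure_mono_ae
    filter_upwards [hmono] with ω hω
    rintro ⟨hy, hd⟩
    refine ⟨hy, le_antisymm (𝒟.le_max' _ (hval zb ω)) ?_⟩
    simp only [hW] at hd ⊢
    calc dm = Dp za ω := hd.symm
      _ ≤ Dp zb ω := hω
  have hapos : 0 < (ℙ {ω | Z ω = za}).toReal := ENNReal.toReal_pos hzapos.ne' (measure_ne_top _ _)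
  have hbpos : 0 < (ℙ {ω | Z ω = zb}).toReal := ENNReal.toReal_pos hzbpos.ne' (measure_ne_top _ _)
  rw [hfac za, hfac zb, ENNReal.toReal_mul, ENNReal.toReal_mul,
    mul_div_cancel_left₀ _ hapos.ne', mul_div_cancel_left₀ _ hbpos.ne']
  exact ENNReal.toReal_mono (measure_ne_top _ _) hle
end

section
/- Under the same partial IV validity assumption, for all c ∈ ℝ: ℙ(D ≤ c | Z = (z_l^k, z_{-l})) ≥ ℙ(D ≤ c | Z = (z_l^{k+1}, z_{-l})). In other words, an increase in the l-th coordinate of the instrument (holding others fixed) yields a first-order stochastically larger conditional distribution of the treatment. -/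
open MeasureTheory ProbabilityTheory Set

/-- Under partial IV validity, for all `c ∈ ℝ`:
`ℙ(D ≤ c | Z = (z_l^k, z_{-l})) ≥ ℙ(D ≤ c | Z = (z_l^{k+1}, z_{-l}))`. -/
theorem stmt15 {Ω : Type*} [MeasureSpace Ω] [IsProbabilityMeasure (ℙ : Measure Ω)]
    {L : ℕ} (𝒟 : Finset ℝ)
    (Dp : (Fin L → ℝ) → Ω → ℝ)            -- potential treatments
    (Z : Ω → (Fin L → ℝ))
    (l : Fin L) (za zb : Fin L → ℝ)       -- za = (z_l^k, z_{-l}), zb = (z_l^{k+1}, z_{-l})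
    (hsame : ∀ j : Fin L, j ≠ l → za j = zb j)
    (hDp : ∀ v, Measurable (Dp v)) (hZ : Measurable Z)
    (hval : ∀ v ω, Dp v ω ∈ 𝒟)
    (hzapos : 0 < ℙ {ω | Z ω = za}) (hzbpos : 0 < ℙ {ω | Z ω = zb})
    -- random assignment: Z independent of the potential treatments
    (hindep : IndepFun Z (fun ω => (fun v : Fin L → ℝ => Dp v ω)) ℙ)
    -- partial monotonicity
    (hmono : ∀ᵐ ω ∂(ℙ : Measure Ω), Dp za ω ≤ Dp zb ω)
    (D : Ω → ℝ) (hD : ∀ ω, D ω = Dp (Z ω) ω) :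
    ∀ c : ℝ,
      (ℙ {ω | D ω ≤ c ∧ Z ω = zb}).toReal / (ℙ {ω | Z ω = zb}).toReal ≤
      (ℙ {ω | D ω ≤ c ∧ Z ω = za}).toReal / (ℙ {ω | Z ω = za}).toReal := by
  intro c
  -- reduce to potential treatments on each event
  have key : ∀ v : Fin L → ℝ,
      ℙ {ω | D ω ≤ c ∧ Z ω = v} = ℙ (Z ⁻¹' {v}) * ℙ ((Dp v) ⁻¹' Set.Iic c) := by
    intro v
    have hset : {ω | D ω ≤ c ∧ Z ω = v} = Z ⁻¹' {v} ∩ (Dp v) ⁻¹' Set.Iic c := by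
      ext ω
      simp only [Set.mem_setOf_eq, Set.mem_inter_iff, Set.mem_preimage,
        Set.mem_singleton_iff, Set.mem_Iic, hD ω]
      constructor
      · rintro ⟨h1, h2⟩; exact ⟨h2, by rwa [h2] at h1⟩
      · rintro ⟨h2, h1⟩; exact ⟨by rwa [h2], h2⟩
    have hiv : IndepFun Z (Dp v) ℙ :=
      hindep.comp measurable_id (measurable_pi_apply v)
    rw [hset, hiv.measure_inter_preimage_eq_mul _ _ (measurableSet_singleton v)
      measurableSet_Iic]
  have hsa : {ω | Z ω = za} = Z ⁻¹' {za} := rfl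
  have hsb : {ω | Z ω = zb} = Z ⁻¹' {zb} := rfl
  rw [key za, key zb, hsa, hsb]
  have hfa : ℙ (Z ⁻¹' {za}) ≠ ⊤ := measure_ne_top _ _
  have hfb : ℙ (Z ⁻¹' {zb}) ≠ ⊤ := measure_ne_top _ _
  have hna : (ℙ (Z ⁻¹' {za})).toReal ≠ 0 := by
    simp [ENNReal.toReal_ne_zero, (hsa ▸ hzapos).ne', hfa]
  have hnb : (ℙ (Z ⁻¹' {zb})).toReal ≠ 0 := by
    simp [ENNReal.toReal_ne_zero, (hsb ▸ hzbpos).ne', hfb]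
  rw [ENNReal.toReal_mul, ENNReal.toReal_mul, mul_comm, mul_div_assoc,
    mul_comm (ℙ (Z ⁻¹' {za})).toReal, mul_div_assoc,
    div_self hna, div_self hnb, mul_one, mul_one]
  have hle : ℙ ((Dp zb) ⁻¹' Set.Iic c) ≤ ℙ ((Dp za) ⁻¹' Set.Iic c) := by
    apply measure_mono_ae
    filter_upwards [hmono] with ω hω hωb
    exact le_trans hω hωb
  exact ENNReal.toReal_mono (measure_ne_top _ _) hle
end
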